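/- Let ξ be a badly approximable irrational, a, b ≥ 1 integers, 0 ≤ r < a, 0 ≤ s < b, and α ∈ ℝ. Let M be an upper bound for the partial quotients of bξ/a. Then for every real Q ≥ 2b there exist integers m, n with 0 ≤ bn+s ≤ Q and |(bn+s)ξ − (am+r) + α| ≤ 2ab(M+2)/Q. -/

import Mathlib

/-- The Gauss-map iteration: the k-th partial quotient of ξ (k ≥ 1) is ⌊gaussIter ξ k⌋. -/
noncomputable def gaussIter (ξ : ℝ) : ℕ → ℝ
  | 0 => ξ
  | n + 1 => 1 / (gaussIter ξ n - ⌊gaussIter ξ n⌋)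

namespace CFaux


lemma gauss_irr {v : ℝ} (hv : Irrational v) : ∀ k, Irrational (gaussIter v k) := by
  intro k
  induction k with
  | zero => exact hv
  | succ n ih =>
      show Irrational (1 / (gaussIter v n - ⌊gaussIter v n⌋))
      have h1 : Irrational (gaussIter v n - (⌊gaussIter v n⌋ : ℤ)) := ih.sub_intCast _
      have h2 : (gaussIter v n - ⌊gaussIter v n⌋) ≠ 0 := h1.ne_zero
      rw [one_div]
      exact h1.inv

lemma fract_pos {v : ℝ} (hv : Irrational v) (k : ℕ) :
    0 < Int.fract (gaussIter v k) := by
  rcases lt_or_eq_of_le (Int.fract_nonneg (gaussIter v k)) with h | h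
  · exact h
  · exfalso
    have := (gauss_irr hv k).sub_intCast ⌊gaussIter v k⌋
    rw [← Int.self_sub_floor] at h
    exact this.ne_zero h.symm

lemma gauss_succ {v : ℝ} (k : ℕ) :
    gaussIter v (k + 1) = 1 / Int.fract (gaussIter v k) := by
  show (1 / (gaussIter v k - ⌊gaussIter v k⌋)) = _
  rw [Int.self_sub_floor]

lemma one_lt_gauss {v : ℝ} (hv : Irrational v) (k : ℕ) :
    1 < gaussIter v (k + 1) := by
  rw [gauss_succ]
  have h0 := fract_pos hv k
  have h1 : Int.fract (gaussIter v k) < 1 := Int.fract_lt_one _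
  rw [lt_div_iff₀ h0]; linarith

lemma gauss_ne_zero {v : ℝ} (hv : Irrational v) (k : ℕ) :
    gaussIter v (k + 1) ≠ 0 := by
  have := one_lt_gauss hv k; linarith

/-- `x_k = ⌊x_k⌋ + 1/x_{k+1}` -/
lemma gauss_rec {v : ℝ} (hv : Irrational v) (k : ℕ) :
    gaussIter v k = (⌊gaussIter v k⌋ : ℝ) + 1 / gaussIter v (k + 1) := by
  rw [gauss_succ, one_div_one_div]
  rw [Int.fract]; ring

lemma floor_gauss_pos {v : ℝ} (hv : Irrational v) (k : ℕ) :
    1 ≤ ⌊gaussIter v (k + 1)⌋ :=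
  Int.le_floor.mpr (by exact_mod_cast (one_lt_gauss hv k).le)

noncomputable def cA (v : ℝ) : ℕ → ℤ
  | 0 => 1
  | 1 => ⌊v⌋
  | (k + 2) => ⌊gaussIter v (k + 1)⌋ * cA v (k + 1) + cA v k

noncomputable def cB (v : ℝ) : ℕ → ℤ
  | 0 => 0
  | 1 => 1
  | (k + 2) => ⌊gaussIter v (k + 1)⌋ * cB v (k + 1) + cB v k




/-- x_{k+1} * x_{k+2} = ⌊x_{k+1}⌋ * x_{k+2} + 1 -/
lemma gauss_mul {v : ℝ} (hv : Irrational v) (k : ℕ) :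
    gaussIter v (k + 1) * gaussIter v (k + 2) =
      (⌊gaussIter v (k + 1)⌋ : ℝ) * gaussIter v (k + 2) + 1 := by
  have h := gauss_rec hv (k + 1)
  have hc : (1 / gaussIter v (k + 2)) * gaussIter v (k + 2) = 1 :=
    one_div_mul_cancel (gauss_ne_zero hv (k + 1))
  linear_combination gaussIter v (k + 2) * h + hc

lemma main_id {v : ℝ} (hv : Irrational v) : ∀ k : ℕ,
    v * ((cB v (k + 1) : ℝ) * gaussIter v (k + 1) + (cB v k : ℝ)) =
      (cA v (k + 1) : ℝ) * gaussIter v (k + 1) + (cA v k : ℝ) := by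
  intro k
  induction k with
  | zero =>
      show v * ((1 : ℤ) * gaussIter v 1 + ((0:ℤ):ℝ)) = ((⌊v⌋ : ℝ)) * gaussIter v 1 + ((1:ℤ):ℝ)
      have h := gauss_rec hv 0
      have hc : (1 / gaussIter v 1) * gaussIter v 1 = 1 :=
        one_div_mul_cancel (gauss_ne_zero hv 0)
      have h0 : gaussIter v 0 = v := rfl
      rw [h0] at h
      push_cast
      linear_combination gaussIter v 1 * h + hc
  | succ k ih =>
      have hxy := gauss_mul hv k
      show v * (((⌊gaussIter v (k+1)⌋ * cB v (k+1) + cB v k : ℤ) : ℝ) * gaussIter v (k + 2) + (cB v (k+1) : ℝ)) =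
        ((⌊gaussIter v (k+1)⌋ * cA v (k+1) + cA v k : ℤ) : ℝ) * gaussIter v (k + 2) + (cA v (k+1) : ℝ)
      push_cast
      linear_combination gaussIter v (k + 2) * ih -
        (v * (cB v (k+1) : ℝ) - (cA v (k+1) : ℝ)) * hxy

lemma det_id (v : ℝ) : ∀ k : ℕ,
    cA v (k + 1) * cB v k - cA v k * cB v (k + 1) = (-1) ^ (k + 1) := by
  intro k
  induction k with
  | zero => show ⌊v⌋ * 0 - 1 * 1 = (-1)^1; ring
  | succ k ih =>
      show (⌊gaussIter v (k+1)⌋ * cA v (k+1) + cA v k) * cB v (k+1) -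
        cA v (k+1) * (⌊gaussIter v (k+1)⌋ * cB v (k+1) + cB v k) = (-1)^(k+2)
      have : (-1 : ℤ)^(k+2) = -(-1)^(k+1) := by ring
      rw [this, ← ih]; ring



lemma cB_two (v : ℝ) (k : ℕ) :
    cB v (k + 2) = ⌊gaussIter v (k + 1)⌋ * cB v (k + 1) + cB v k := rfl

lemma B_pos {v : ℝ} (hv : Irrational v) : ∀ k, 0 ≤ cB v k ∧ 1 ≤ cB v (k + 1) := by
  intro k
  induction k with
  | zero => exact ⟨le_refl 0, le_refl 1⟩
  | succ k ih =>
      obtain ⟨h0, h1⟩ := ih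
      refine ⟨by linarith, ?_⟩
      rw [cB_two]
      have ha := floor_gauss_pos hv k
      nlinarith

lemma B_mono {v : ℝ} (hv : Irrational v) : ∀ k, cB v k ≤ cB v (k + 1) := by
  intro k
  cases k with
  | zero => norm_num [cB]
  | succ k =>
      rw [cB_two]
      have ha := floor_gauss_pos hv k
      have h0 := (B_pos hv k).1
      have h1 := (B_pos hv k).2
      nlinarith

lemma B_grow_aux {v : ℝ} (hv : Irrational v) :
    ∀ k : ℕ, (k : ℤ) ≤ cB v (k + 1) ∧ (k : ℤ) + 1 ≤ cB v (k + 2) := by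
  intro k
  induction k with
  | zero =>
      constructor
      · norm_num [cB]
      · rw [cB_two]
        have ha := floor_gauss_pos hv 0
        have e1 : cB v 1 = 1 := rfl
        have e0 : cB v 0 = 0 := rfl
        rw [e1, e0]
        omega
  | succ k ih =>
      refine ⟨by exact_mod_cast ih.2, ?_⟩
      rw [cB_two]
      have ha := floor_gauss_pos hv (k + 1)
      have h1 := (B_pos hv k).2
      have h2 := ih.2
      push_cast
      nlinarith

lemma B_grow {v : ℝ} (hv : Irrational v) : ∀ k : ℕ, (k : ℤ) ≤ cB v (k + 1) :=
  fun k => (B_grow_aux hv k).1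

lemma err {v : ℝ} (hv : Irrational v) (k : ℕ) :
    |(cB v (k + 1) : ℝ) * v - (cA v (k + 1) : ℝ)| ≤ 1 / (cB v (k + 2) : ℝ) := by
  set x := gaussIter v (k + 1) with hx
  set D : ℝ := (cB v (k + 1) : ℝ) * x + (cB v k : ℝ) with hD
  have hfloorlt : (⌊x⌋ : ℝ) < x := by
    have := fract_pos hv (k + 1)
    rw [Int.fract] at this; linarith
  have hB1 : (1 : ℝ) ≤ (cB v (k + 1) : ℝ) := by exact_mod_cast (B_pos hv k).2
  have hB0 : (0 : ℝ) ≤ (cB v k : ℝ) := by exact_mod_cast (B_pos hv k).1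
  have hBk2 : (1 : ℝ) ≤ (cB v (k + 2) : ℝ) := by exact_mod_cast (B_pos hv (k + 1)).2
  have hDgt : (cB v (k + 2) : ℝ) < D := by
    have : (cB v (k + 2) : ℝ) = (⌊x⌋ : ℝ) * (cB v (k + 1) : ℝ) + (cB v k : ℝ) := by
      rw [cB_two]; push_cast; ring
    rw [this, hD]
    nlinarith
  have hDpos : 0 < D := by linarith
  have hdet : ((cB v (k + 1) : ℝ) * (cA v k : ℝ) - (cA v (k + 1) : ℝ) * (cB v k : ℝ)) =
      (-1 : ℝ) ^ k := by
    have h2 : (cA v (k + 1) : ℝ) * (cB v k : ℝ) - (cA v k : ℝ) * (cB v (k + 1) : ℝ) =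
        (-1 : ℝ) ^ (k + 1) := by exact_mod_cast det_id v k
    linear_combination -h2
  have hq : ((cB v (k + 1) : ℝ) * v - (cA v (k + 1) : ℝ)) * D = (-1 : ℝ) ^ k := by
    have hid := main_id hv k
    rw [hD, ← hdet]
    linear_combination (cB v (k + 1) : ℝ) * hid
  have habs : |(cB v (k + 1) : ℝ) * v - (cA v (k + 1) : ℝ)| * D = 1 := by
    rw [← abs_of_pos hDpos, ← abs_mul, hq]
    rw [abs_pow, abs_neg, abs_one, one_pow]
  have heq : |(cB v (k + 1) : ℝ) * v - (cA v (k + 1) : ℝ)| = 1 / D :=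
    eq_one_div_of_mul_eq_one_left habs
  rw [heq]
  exact one_div_le_one_div_of_le (by linarith) hDgt.le



lemma core {v : ℝ} (hv : Irrational v) (M : ℤ)
    (hM : ∀ k : ℕ, 1 ≤ k → ⌊gaussIter v k⌋ ≤ M) (β : ℝ) (N : ℤ) (hN : 1 ≤ N) :
    ∃ n m : ℤ, 0 ≤ n ∧ n ≤ N ∧
      |(n : ℝ) * v - (m : ℝ) + β| ≤ ((M : ℝ) + 2) / ((N : ℝ) + 1) := by
  classical
  have hM1 : 1 ≤ M := le_trans (floor_gauss_pos hv 0) (hM 1 le_rfl)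
  -- find k with cB (k+1) ≤ N < cB (k+2)
  have hex : ∃ k : ℕ, N < cB v (k + 2) := by
    refine ⟨N.toNat, ?_⟩
    have h1 := (B_grow_aux hv N.toNat).2
    have h2 : N ≤ (N.toNat : ℤ) := Int.self_le_toNat N
    omega
  set k := Nat.find hex with hk
  have hk2 : N < cB v (k + 2) := Nat.find_spec hex
  have hk1 : cB v (k + 1) ≤ N := by
    rcases Nat.eq_zero_or_pos k with h0 | h0
    · have : cB v 1 = 1 := rfl
      rw [h0, this]; exact hN
    · have hmin := Nat.find_min hex (m := k - 1) (by omega)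
      have heq : k - 1 + 2 = k + 1 := by omega
      rw [heq] at hmin
      omega
  set q : ℤ := cB v (k + 1) with hqdef
  set p : ℤ := cA v (k + 1) with hpdef
  have hq1 : 1 ≤ q := (B_pos hv k).2
  -- Bezout
  have hbez : ∃ u w : ℤ, u * p + w * q = 1 := by
    have hd := det_id v k
    rcases Nat.even_or_odd (k + 1) with he | ho
    · exact ⟨cB v k, -cA v k, by rw [he.neg_one_pow] at hd; linarith⟩
    · exact ⟨-cB v k, cA v k, by rw [ho.neg_one_pow] at hd; linarith⟩
  obtain ⟨u, w, huw⟩ := hbez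
  set e : ℤ := round ((q : ℝ) * β) with he
  set c : ℤ := -e with hc
  set n : ℤ := (c * u) % q with hn
  have hqz : q ≠ 0 := by omega
  have h0n : 0 ≤ n := Int.emod_nonneg _ hqz
  have hnq : n < q := Int.emod_lt_of_pos _ (by omega)
  -- q ∣ n * p - c
  have hmod : n * p ≡ c [ZMOD q] := by
    have h1 : n ≡ c * u [ZMOD q] := Int.mod_modEq (c * u) q
    have h3 : u * p ≡ 1 [ZMOD q] :=
      Int.modEq_iff_dvd.mpr ⟨w, by linear_combination -huw⟩
    calc n * p ≡ c * u * p [ZMOD q] := h1.mul_right p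
      _ = c * (u * p) := by ring
      _ ≡ c * 1 [ZMOD q] := h3.mul_left c
      _ = c := by ring
  obtain ⟨j', hj'⟩ := Int.modEq_iff_dvd.mp hmod
  -- hj' : c - n * p = q * j'
  have hj : n * p = c + q * (-j') := by linear_combination -hj'
  refine ⟨n, -j', h0n, by omega, ?_⟩
  have hqR : (0 : ℝ) < (q : ℝ) := by exact_mod_cast lt_of_lt_of_le one_pos hq1
  set δ : ℝ := (q : ℝ) * v - (p : ℝ) with hδdef
  have hδ : |δ| ≤ 1 / (cB v (k + 2) : ℝ) := err hv k
  have hcast : (n : ℝ) * (p : ℝ) = (c : ℝ) + (q : ℝ) * (-j' : ℤ) := by exact_mod_cast hj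
  have key' : ((n : ℝ) * v - ((-j' : ℤ) : ℝ) + β) * (q : ℝ) =
      ((q : ℝ) * β - (e : ℝ)) + (n : ℝ) * δ := by
    have hcR : (c : ℝ) = -(e : ℝ) := by exact_mod_cast congrArg (fun z : ℤ => (z : ℝ)) hc
    rw [hδdef]
    push_cast at hcast ⊢
    linear_combination hcast + hcR
  have h5 : |(n : ℝ) * v - ((-j' : ℤ) : ℝ) + β| * (q : ℝ) =
      |((q : ℝ) * β - (e : ℝ)) + (n : ℝ) * δ| := by
    have h := congrArg abs key'
    rwa [abs_mul, abs_of_pos hqR] at h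
  have hround : |(q : ℝ) * β - (e : ℝ)| ≤ 1 / 2 := abs_sub_round ((q : ℝ) * β)
  have hnR : (0 : ℝ) ≤ (n : ℝ) := by exact_mod_cast h0n
  have hnRq : (n : ℝ) ≤ (q : ℝ) := by exact_mod_cast hnq.le
  have h6 : |((q : ℝ) * β - (e : ℝ)) + (n : ℝ) * δ| ≤ 1 / 2 + (q : ℝ) * |δ| := by
    calc |((q : ℝ) * β - (e : ℝ)) + (n : ℝ) * δ| ≤
        |(q : ℝ) * β - (e : ℝ)| + |(n : ℝ) * δ| := abs_add_le _ _
      _ ≤ 1 / 2 + (q : ℝ) * |δ| := by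
          rw [abs_mul, abs_of_nonneg hnR]
          have := abs_nonneg δ
          nlinarith
  have h7 : |(n : ℝ) * v - ((-j' : ℤ) : ℝ) + β| ≤ 1 / (2 * (q : ℝ)) + |δ| := by
    have heq : |(n : ℝ) * v - ((-j' : ℤ) : ℝ) + β| =
        |((q : ℝ) * β - (e : ℝ)) + (n : ℝ) * δ| / (q : ℝ) := by
      rw [eq_div_iff hqR.ne']; exact h5
    calc |(n : ℝ) * v - ((-j' : ℤ) : ℝ) + β|
        = |((q : ℝ) * β - (e : ℝ)) + (n : ℝ) * δ| / (q : ℝ) := heq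
      _ ≤ (1 / 2 + (q : ℝ) * |δ|) / (q : ℝ) := by
          gcongr
      _ = 1 / (2 * (q : ℝ)) + |δ| := by field_simp
  -- size estimates
  have hq'int : cB v (k + 2) ≤ (M + 1) * q := by
    have ha : ⌊gaussIter v (k + 1)⌋ ≤ M := hM (k + 1) (by omega)
    have hbm : cB v k ≤ q := B_mono hv k
    rw [cB_two]
    nlinarith
  have hNR : (1 : ℝ) ≤ (N : ℝ) := by exact_mod_cast hN
  have hq'R1 : ((N : ℝ) + 1) ≤ (cB v (k + 2) : ℝ) := by exact_mod_cast hk2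
  have hq'R2 : (cB v (k + 2) : ℝ) ≤ ((M : ℝ) + 1) * (q : ℝ) := by exact_mod_cast hq'int
  have hMR : (1 : ℝ) ≤ (M : ℝ) := by exact_mod_cast hM1
  have hNpos : (0 : ℝ) < (N : ℝ) + 1 := by linarith
  have i1 : 1 / (cB v (k + 2) : ℝ) ≤ 1 / ((N : ℝ) + 1) :=
    one_div_le_one_div_of_le hNpos hq'R1
  have i2 : 1 / (2 * (q : ℝ)) ≤ ((M : ℝ) + 1) / (2 * ((N : ℝ) + 1)) := by
    rw [div_le_div_iff₀ (by positivity) (by positivity)]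
    nlinarith
  have i3 : ((M : ℝ) + 1) / (2 * ((N : ℝ) + 1)) + 1 / ((N : ℝ) + 1) ≤
      ((M : ℝ) + 2) / ((N : ℝ) + 1) := by
    rw [div_add_div _ _ (by positivity) (by positivity),
      div_le_div_iff₀ (by positivity) (by positivity)]
    nlinarith [mul_nonneg (by linarith : (0:ℝ) ≤ (M : ℝ) + 1)
      (mul_nonneg hNpos.le hNpos.le)]
  calc |(n : ℝ) * v - ((-j' : ℤ) : ℝ) + β| ≤ 1 / (2 * (q : ℝ)) + |δ| := h7
    _ ≤ 1 / (2 * (q : ℝ)) + 1 / (cB v (k + 2) : ℝ) := by linarith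
    _ ≤ ((M : ℝ) + 1) / (2 * ((N : ℝ) + 1)) + 1 / ((N : ℝ) + 1) := by linarith
    _ ≤ ((M : ℝ) + 2) / ((N : ℝ) + 1) := i3
end CFaux

/-- For a badly approximable irrational ξ (partial quotients of bξ/a
bounded by M), integers a, b ≥ 1, 0 ≤ r < a, 0 ≤ s < b and α ∈ ℝ, for every real
Q ≥ 2b there exist integers m, n with 0 ≤ bn+s ≤ Q and
|(bn+s)ξ − (am+r) + α| ≤ 2ab(M+2)/Q. -/
theorem inhomogeneous_uniform_approx_bad
    (ξ α : ℝ) (hξ : Irrational ξ) (a b r s : ℤ)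
    (ha : 1 ≤ a) (hb : 1 ≤ b) (hr0 : 0 ≤ r) (hra : r ≤ a - 1)
    (hs0 : 0 ≤ s) (hsb : s ≤ b - 1)
    (M : ℤ) (hM : ∀ k : ℕ, 1 ≤ k → ⌊gaussIter ((b : ℝ) * ξ / (a : ℝ)) k⌋ ≤ M) :
    ∀ Q : ℝ, 2 * (b : ℝ) ≤ Q → ∃ m n : ℤ,
      0 ≤ b * n + s ∧ ((b * n + s : ℤ) : ℝ) ≤ Q ∧
      |((b * n + s : ℤ) : ℝ) * ξ - ((a * m + r : ℤ) : ℝ) + α| ≤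
        2 * (a : ℝ) * (b : ℝ) * ((M : ℝ) + 2) / Q := by
  intro Q hQ
  have ha0 : a ≠ 0 := by omega
  have hb0 : b ≠ 0 := by omega
  set v : ℝ := (b : ℝ) * ξ / (a : ℝ) with hvdef
  have hv : Irrational v := (hξ.intCast_mul hb0).div_intCast ha0
  have haR : (0 : ℝ) < (a : ℝ) := by exact_mod_cast lt_of_lt_of_le one_pos ha
  have hbR : (0 : ℝ) < (b : ℝ) := by exact_mod_cast lt_of_lt_of_le one_pos hb
  have hbR1 : (1 : ℝ) ≤ (b : ℝ) := by exact_mod_cast hb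
  have hsR : (0 : ℝ) ≤ (s : ℝ) := by exact_mod_cast hs0
  have hsbR : (s : ℝ) ≤ (b : ℝ) - 1 := by exact_mod_cast hsb
  have hQpos : 0 < Q := lt_of_lt_of_le (by linarith) hQ
  set β : ℝ := ((s : ℝ) * ξ - (r : ℝ) + α) / (a : ℝ) with hβdef
  set N : ℤ := ⌊(Q - (s : ℝ)) / (b : ℝ)⌋ with hNdef
  have hNfl : (N : ℝ) ≤ (Q - (s : ℝ)) / (b : ℝ) := Int.floor_le _
  have hNceil : (Q - (s : ℝ)) / (b : ℝ) < (N : ℝ) + 1 := Int.lt_floor_add_one _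
  have hN1 : 1 ≤ N := by
    rw [hNdef]
    apply Int.le_floor.mpr
    rw [le_div_iff₀ hbR]
    push_cast
    linarith
  have hNR1 : (1 : ℝ) ≤ (N : ℝ) := by exact_mod_cast hN1
  have hM1 : 1 ≤ M := le_trans (CFaux.floor_gauss_pos hv 0) (hM 1 le_rfl)
  have hMR : (1 : ℝ) ≤ (M : ℝ) := by exact_mod_cast hM1
  obtain ⟨n, m, h0n, hnN, hbound⟩ := CFaux.core hv M hM β N hN1
  refine ⟨m, n, ?_, ?_, ?_⟩
  · have := mul_nonneg (by omega : (0 : ℤ) ≤ b) h0n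
    omega
  · push_cast
    have hnR : (n : ℝ) ≤ (N : ℝ) := by exact_mod_cast hnN
    have h1 : (N : ℝ) * (b : ℝ) ≤ Q - (s : ℝ) := (le_div_iff₀ hbR).mp hNfl
    nlinarith
  · have hexpr : ((b * n + s : ℤ) : ℝ) * ξ - ((a * m + r : ℤ) : ℝ) + α =
        (a : ℝ) * ((n : ℝ) * v - (m : ℝ) + β) := by
      rw [hvdef, hβdef]
      push_cast
      field_simp
      ring
    rw [hexpr, abs_mul, abs_of_pos haR]
    have hQle : Q ≤ 2 * (b : ℝ) * ((N : ℝ) + 1) := by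
      have h1 : Q - (s : ℝ) < (b : ℝ) * ((N : ℝ) + 1) := by
        rw [div_lt_iff₀ hbR] at hNceil
        linarith
      nlinarith
    have hNpos : (0 : ℝ) < (N : ℝ) + 1 := by linarith
    calc (a : ℝ) * |(n : ℝ) * v - (m : ℝ) + β|
        ≤ (a : ℝ) * (((M : ℝ) + 2) / ((N : ℝ) + 1)) :=
          mul_le_mul_of_nonneg_left hbound haR.le
      _ ≤ 2 * (a : ℝ) * (b : ℝ) * ((M : ℝ) + 2) / Q := by
          rw [mul_div_assoc' , div_le_div_iff₀ hNpos hQpos]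
          nlinarith [mul_nonneg (mul_nonneg haR.le
            (by linarith : (0 : ℝ) ≤ (M : ℝ) + 2))
            (by linarith : (0 : ℝ) ≤ 2 * (b : ℝ) * ((N : ℝ) + 1) - Q)]
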